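/- Failure of the classical Harnack inequality: let N ≥ 1, α ∈ (0,1), β = 1 − α, Λ = 1 and ε ∈ (0,1). For every M > 0 there exist a family ν assigning to each x ∈ ℝ^N a symmetric probability measure ν_x supported in the closed unit ball (with x ↦ ∫ u(x+z) dν_x(z) Borel measurable for every bounded Borel measurable u) and a bounded Borel measurable function u : ℝ^N → ℝ with u ≥ 1 on ℝ^N, such that u satisfies the DPP u(x) = α ∫ u(x+εz) dν_x(z) + β ⨍_{B_ε(x)} u(y) dy for every x ∈ B_2, inf_{B_1} u = 1, and sup_{B_1} u ≥ M. -/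

import Mathlib

open MeasureTheory Metric

/-- A function that agrees with a measurable function off a countable set is measurable. -/
lemma measurable_of_countable_diff {X : Type*} [MeasurableSpace X]
    [MeasurableSingletonClass X] {f g : X → ℝ} (hf : Measurable f)
    (h : {x | g x ≠ f x}.Countable) : Measurable g := by
  intro s hs
  have hD : MeasurableSet {x | g x ≠ f x} := h.measurableSet
  have hset : g ⁻¹' s = ({x | g x ≠ f x} ∩ g ⁻¹' s) ∪ ({x | g x ≠ f x}ᶜ ∩ f ⁻¹' s) := by
    ext x
    by_cases hx : g x = f x <;>
      simp [Set.mem_inter_iff, Set.mem_preimage, hx]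
  rw [hset]
  exact ((h.mono Set.inter_subset_left).measurableSet).union (hD.compl.inter (hf hs))

lemma integrable_dirac_of_measurable {X : Type*} [MeasurableSpace X]
    [MeasurableSingletonClass X] {f : X → ℝ} (hf : Measurable f) (a : X) :
    Integrable f (MeasureTheory.Measure.dirac a) := by
  refine ⟨hf.aestronglyMeasurable, ?_⟩
  unfold MeasureTheory.HasFiniteIntegral
  rw [lintegral_dirac]
  exact ENNReal.coe_lt_top

noncomputable def twoPt {X : Type*} [MeasurableSpace X] (a b : X) : Measure X :=
  (2⁻¹ : ENNReal) • Measure.dirac a + (2⁻¹ : ENNReal) • Measure.dirac b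

lemma twoPt_apply {X : Type*} [MeasurableSpace X] (a b : X) {S : Set X}
    (hS : MeasurableSet S) :
    twoPt a b S = 2⁻¹ * S.indicator 1 a + 2⁻¹ * S.indicator 1 b := by
  rw [twoPt]
  simp [Measure.dirac_apply' _ hS]

instance twoPt_prob {X : Type*} [MeasurableSpace X] (a b : X) :
    IsProbabilityMeasure (twoPt a b) := by
  constructor
  rw [twoPt_apply a b MeasurableSet.univ]
  simp [ENNReal.inv_two_add_inv_two]

lemma twoPt_integral {X : Type*} [MeasurableSpace X] [MeasurableSingletonClass X]
    (a b : X) {f : X → ℝ} (hf : Measurable f) :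
    ∫ z, f z ∂(twoPt a b) = (f a + f b) / 2 := by
  rw [twoPt, integral_add_measure
    ((integrable_dirac_of_measurable hf a).smul_measure (by norm_num))
    ((integrable_dirac_of_measurable hf b).smul_measure (by norm_num)),
    integral_smul_measure, integral_smul_measure, integral_dirac, integral_dirac]
  rw [show ((2⁻¹ : ENNReal)).toReal = 2⁻¹ by simp]
  rw [smul_eq_mul, smul_eq_mul]
  ring

set_option maxHeartbeats 1000000 in
/-- **failure of the classical Harnack inequality.** Let `N ≥ 1`,
`α ∈ (0,1)`, `β = 1 − α`, `Λ = 1` and `ε ∈ (0,1)`. For every `M > 0` there exist a family `ν`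
of symmetric probability measures supported in the closed unit ball (with
`x ↦ ∫ u(x+z) dν_x(z)` Borel measurable for every bounded Borel measurable `u`) and a bounded
Borel measurable `u : ℝ^N → ℝ` with `u ≥ 1` on `ℝ^N` satisfying the DPP
`u(x) = α ∫ u(x+εz) dν_x(z) + β ⨍_{B_ε(x)} u(y) dy` for every `x ∈ B_2`,
with `inf_{B_1} u = 1` and `sup_{B_1} u ≥ M`. -/
theorem harnack_fails (N : ℕ) (hN : 1 ≤ N) (α β ε : ℝ)
    (hα : α ∈ Set.Ioo (0 : ℝ) 1) (hβ : β = 1 - α) (hε : ε ∈ Set.Ioo (0 : ℝ) 1)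
    (M : ℝ) (hM : 0 < M) :
    ∃ (ν : EuclideanSpace ℝ (Fin N) → Measure (EuclideanSpace ℝ (Fin N)))
      (u : EuclideanSpace ℝ (Fin N) → ℝ),
      (∀ x, IsProbabilityMeasure (ν x)) ∧
      (∀ x, ν x (closedBall (0 : EuclideanSpace ℝ (Fin N)) 1)ᶜ = 0) ∧
      (∀ x, ∀ s : Set (EuclideanSpace ℝ (Fin N)), MeasurableSet s →
        ν x s = ν x (Neg.neg ⁻¹' s)) ∧
      (∀ v : EuclideanSpace ℝ (Fin N) → ℝ, Measurable v → (∃ K, ∀ x, |v x| ≤ K) →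
        Measurable fun x => ∫ z, v (x + z) ∂(ν x)) ∧
      Measurable u ∧ (∃ K, ∀ x, |u x| ≤ K) ∧
      (∀ x, 1 ≤ u x) ∧
      (∀ x ∈ ball (0 : EuclideanSpace ℝ (Fin N)) 2,
        u x = α * ∫ z, u (x + ε • z) ∂(ν x) + β * ⨍ y in ball x ε, u y) ∧
      sInf (u '' ball (0 : EuclideanSpace ℝ (Fin N)) 1) = 1 ∧
      M ≤ sSup (u '' ball (0 : EuclideanSpace ℝ (Fin N)) 1) := by
  classical
  obtain ⟨hα0, hα1⟩ := hα
  obtain ⟨hε0, hε1⟩ := hε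
  set X := EuclideanSpace ℝ (Fin N) with hX
  haveI : Nonempty (Fin N) := ⟨⟨0, hN⟩⟩
  haveI : Nontrivial X := by
    rw [hX]; infer_instance
  haveI : NullSingletonClass (volume : Measure X) := by
    rw [hX] at *; infer_instance
  set i0 : Fin N := ⟨0, hN⟩ with hi0
  set e : X := EuclideanSpace.single i0 (1 : ℝ) with he_def
  have he_norm : ‖e‖ = 1 := by
    rw [he_def, EuclideanSpace.norm_single]; simp
  have he_coord : e i0 = 1 := by rw [he_def, EuclideanSpace.single_apply]; simp
  -- the eigenvalue
  set s : ℝ := Real.sqrt (1 - α ^ 2) with hs_def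
  have hs_nonneg : 0 ≤ s := Real.sqrt_nonneg _
  have hs_sq : s ^ 2 = 1 - α ^ 2 := by
    rw [hs_def, Real.sq_sqrt]; nlinarith
  set lam : ℝ := (1 + s) / α with hlam_def
  have hlam_pos : 0 < lam := by positivity
  have hlam_ne : lam ≠ 0 := ne_of_gt hlam_pos
  have hlam_ge1 : 1 ≤ lam := by
    rw [hlam_def, le_div_iff₀ hα0]; nlinarith
  have hlam_eq : α * lam ^ 2 + α = 2 * lam := by
    rw [hlam_def]
    field_simp
    nlinarith [hs_sq]
  clear_value lam
  clear_value s
  set K : ℤ := ⌈(2 : ℝ) / ε⌉ + 1 with hK_def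
  have hK_pos : 0 ≤ K := by
    have h2 : (0 : ℝ) < 2 / ε := by positivity
    have : (0 : ℤ) ≤ ⌈(2 : ℝ) / ε⌉ := by
      by_contra hcon
      push_neg at hcon
      have : ((⌈(2 : ℝ) / ε⌉ : ℝ)) < 0 := by exact_mod_cast hcon
      linarith [Int.le_ceil ((2 : ℝ) / ε)]
    omega
  set g : ℤ → ℝ := fun k => 1 + M * lam ^ (min k K) with hg_def
  have hg_eq : ∀ k, g k = 1 + M * lam ^ (min k K) := fun _ => rfl
  have hg_ge1 : ∀ k, 1 ≤ g k := by
    intro k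
    have h1 : (0 : ℝ) < lam ^ (min k K) := zpow_pos hlam_pos _
    rw [hg_eq]; nlinarith
  have hg_le : ∀ k, g k ≤ 1 + M * lam ^ K := by
    intro k
    have h1 : lam ^ (min k K) ≤ lam ^ K :=
      zpow_le_zpow_right₀ hlam_ge1 (min_le_right _ _)
    rw [hg_eq]
    nlinarith
  -- the set of special points
  set P : X → Prop := fun x => ∃ k : ℤ, x = ((k : ℝ) * ε) • e with hP_def
  have hP_iff : ∀ x, P x ↔ ∃ k : ℤ, x = ((k : ℝ) * ε) • e := fun _ => Iff.rfl
  have hinj : ∀ k k' : ℤ, ((k : ℝ) * ε) • e = ((k' : ℝ) * ε) • e → k = k' := by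
    intro k k' h
    have hc : ((k : ℝ) * ε) * e i0 = ((k' : ℝ) * ε) * e i0 :=
      congrArg (fun y : X => y i0) h
    rw [he_coord, mul_one, mul_one] at hc
    have : (k : ℝ) = k' := mul_right_cancel₀ (ne_of_gt hε0) hc
    exact_mod_cast this
  set u : X → ℝ := fun x => if h : P x then g h.choose else 1 with hu_def
  have hu_val : ∀ k : ℤ, u (((k : ℝ) * ε) • e) = g k := by
    intro k
    have hPx : P (((k : ℝ) * ε) • e) := ⟨k, rfl⟩
    have : u (((k : ℝ) * ε) • e) = g hPx.choose := dif_pos hPx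
    rw [this]
    congr 1
    exact hinj _ _ hPx.choose_spec.symm
  have hu_not : ∀ x, ¬ P x → u x = 1 := fun x hx => dif_neg hx
  have hu_ge1 : ∀ x, 1 ≤ u x := by
    intro x
    by_cases hx : P x
    · rw [show u x = g hx.choose from dif_pos hx]; exact hg_ge1 _
    · rw [hu_not x hx]
  have hu_le : ∀ x, u x ≤ 1 + M * lam ^ K := by
    intro x
    by_cases hx : P x
    · rw [show u x = g hx.choose from dif_pos hx]; exact hg_le _
    · rw [hu_not x hx]
      have : (0 : ℝ) < lam ^ K := zpow_pos hlam_pos _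
      nlinarith
  -- countability of the special set
  have hD_count : {x : X | P x}.Countable := by
    have hsub : {x : X | P x} ⊆ Set.range (fun k : ℤ => ((k : ℝ) * ε) • e) := by
      rintro x ⟨k, rfl⟩; exact ⟨k, rfl⟩
    exact (Set.countable_range _).mono hsub
  have hD_null : (volume : Measure X) {x : X | P x} = 0 :=
    hD_count.measure_zero _
  -- u is measurable
  have hu_meas : Measurable u := by
    apply measurable_of_countable_diff (f := fun _ => (1 : ℝ)) measurable_const
    apply hD_count.mono
    intro x hx
    simp only [Set.mem_setOf_eq] at hx ⊢
    by_contra hP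
    exact hx (hu_not x hP)
  -- the measures
  set ν : X → Measure X := fun x => if P x then twoPt e (-e) else Measure.dirac 0
    with hν_def
  have hν_pos : ∀ x, P x → ν x = twoPt e (-e) := fun x hx => if_pos hx
  have hν_neg : ∀ x, ¬ P x → ν x = Measure.dirac 0 := fun x hx => if_neg hx
  have hint : ∀ (x : X) {f : X → ℝ}, Measurable f →
      ∫ z, f z ∂(ν x) = if P x then (f e + f (-e)) / 2 else f 0 := by
    intro x f hf
    by_cases hx : P x
    · rw [hν_pos x hx, if_pos hx]
      exact twoPt_integral _ _ hf
    · rw [hν_neg x hx, if_neg hx]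
      exact integral_dirac f 0
  refine ⟨ν, u, ?_, ?_, ?_, ?_, hu_meas, ⟨1 + M * lam ^ K, ?_⟩, hu_ge1, ?_, ?_, ?_⟩
  · -- probability measures
    intro x
    by_cases hx : P x
    · rw [hν_pos x hx]; infer_instance
    · rw [hν_neg x hx]; infer_instance
  · -- support in closed unit ball
    intro x
    have he1 : e ∈ closedBall (0 : X) 1 := by
      rw [mem_closedBall, dist_eq_norm, sub_zero, he_norm]
    have he2 : -e ∈ closedBall (0 : X) 1 := by
      rw [mem_closedBall, dist_eq_norm, sub_zero, norm_neg, he_norm]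
    have h0 : (0 : X) ∈ closedBall (0 : X) 1 := by
      rw [mem_closedBall, dist_self]; norm_num
    have hmeas : MeasurableSet (closedBall (0 : X) 1)ᶜ :=
      (measurableSet_closedBall).compl
    by_cases hx : P x
    · rw [hν_pos x hx, twoPt_apply _ _ hmeas,
        Set.indicator_of_notMem (Set.notMem_compl_iff.mpr he1),
        Set.indicator_of_notMem (Set.notMem_compl_iff.mpr he2)]
      simp
    · rw [hν_neg x hx, Measure.dirac_apply' _ hmeas,
        Set.indicator_of_notMem (Set.notMem_compl_iff.mpr h0)]
  · -- symmetry
    intro x S hS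
    have hSneg : MeasurableSet (Neg.neg ⁻¹' S) := measurable_neg hS
    have hmem1 : e ∈ Neg.neg ⁻¹' S ↔ -e ∈ S := Iff.rfl
    have hmem2 : -e ∈ Neg.neg ⁻¹' S ↔ e ∈ S := by
      rw [Set.mem_preimage, neg_neg]
    have hmem0 : (0 : X) ∈ Neg.neg ⁻¹' S ↔ (0 : X) ∈ S := by
      rw [Set.mem_preimage, neg_zero]
    by_cases hx : P x
    · rw [hν_pos x hx, twoPt_apply _ _ hS, twoPt_apply _ _ hSneg]
      have h1 : (Neg.neg ⁻¹' S).indicator (1 : X → ENNReal) e = S.indicator 1 (-e) := by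
        by_cases h : -e ∈ S
        · rw [Set.indicator_of_mem (hmem1.mpr h), Set.indicator_of_mem h]; rfl
        · rw [Set.indicator_of_notMem (fun hc => h (hmem1.mp hc)),
            Set.indicator_of_notMem h]
      have h2 : (Neg.neg ⁻¹' S).indicator (1 : X → ENNReal) (-e) = S.indicator 1 e := by
        by_cases h : e ∈ S
        · rw [Set.indicator_of_mem (hmem2.mpr h), Set.indicator_of_mem h]; rfl
        · rw [Set.indicator_of_notMem (fun hc => h (hmem2.mp hc)),
            Set.indicator_of_notMem h]
      rw [h1, h2, add_comm]
    · rw [hν_neg x hx, Measure.dirac_apply' _ hS, Measure.dirac_apply' _ hSneg]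
      by_cases h : (0 : X) ∈ S
      · rw [Set.indicator_of_mem h, Set.indicator_of_mem (hmem0.mpr h)]
      · rw [Set.indicator_of_notMem h,
          Set.indicator_of_notMem (fun hc => h (hmem0.mp hc))]
  · -- measurability of the convolution
    intro v hv _
    have key : ∀ x : X, ¬ P x → (∫ z, v (x + z) ∂(ν x)) = v x := by
      intro x hx
      have hm : Measurable (fun z : X => v (x + z)) := hv.comp (measurable_const_add x)
      rw [hint x hm, if_neg hx, add_zero]
    apply measurable_of_countable_diff (f := v) hv
    apply hD_count.mono
    intro x hx
    simp only [Set.mem_setOf_eq] at hx ⊢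
    by_contra hP
    exact hx (key x hP)
  · -- bound
    intro x
    rw [abs_le]
    have h1 : (0 : ℝ) < lam ^ K := zpow_pos hlam_pos _
    constructor
    · nlinarith [hu_ge1 x]
    · exact hu_le x
  · -- the DPP
    intro x hx
    haveI : IsFiniteMeasure ((volume : Measure X).restrict (ball x ε)) := by
      constructor
      rw [Measure.restrict_apply_univ]
      exact measure_ball_lt_top
    haveI : NeZero ((volume : Measure X).restrict (ball x ε)) := by
      constructor
      rw [Ne, Measure.restrict_eq_zero]
      exact ne_of_gt (measure_ball_pos _ x hε0)
    have havg : (⨍ y in ball x ε, u y) = 1 := by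
      have hae : u =ᵐ[(volume : Measure X).restrict (ball x ε)] (fun _ => (1 : ℝ)) := by
        apply ae_restrict_of_ae
        rw [ae_iff]
        apply measure_mono_null _ hD_null
        intro y hy
        simp only [Set.mem_setOf_eq] at hy ⊢
        by_contra hP
        exact hy (hu_not y hP)
      rw [average_congr hae, average_const]
    rw [havg]
    have hmeas_shift : Measurable fun z : X => u (x + ε • z) :=
      hu_meas.comp ((measurable_const_smul ε).const_add x)
    rw [hint x hmeas_shift]
    by_cases hxP : P x
    · obtain ⟨k, rfl⟩ := hxP
      rw [if_pos (⟨k, rfl⟩ : P (((k : ℝ) * ε) • e))]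
      -- range of k
      have hnorm : ‖(((k : ℝ) * ε) • e)‖ < 2 := by
        rwa [mem_ball_zero_iff] at hx
      have habs : |(k : ℝ)| * ε < 2 := by
        rw [norm_smul, he_norm, mul_one, Real.norm_eq_abs, abs_mul,
          abs_of_pos hε0] at hnorm
        exact hnorm
      have hk_le : (k : ℝ) < 2 / ε := by
        rw [lt_div_iff₀ hε0]
        calc (k : ℝ) * ε ≤ |(k : ℝ)| * ε :=
              mul_le_mul_of_nonneg_right (le_abs_self _) (le_of_lt hε0)
          _ < 2 := habs
      have hkK : k + 1 ≤ K := by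
        have h1 : (k : ℝ) ≤ (⌈(2:ℝ)/ε⌉ : ℝ) := le_trans (le_of_lt hk_le) (Int.le_ceil _)
        have h2 : k ≤ ⌈(2:ℝ)/ε⌉ := by exact_mod_cast h1
        rw [hK_def]
        omega
      -- identify the two jump points
      have hplus : (((k : ℝ) * ε) • e) + ε • e = (((k + 1 : ℤ) : ℝ) * ε) • e := by
        rw [← add_smul]
        congr 1
        push_cast
        ring
      have hminus : (((k : ℝ) * ε) • e) + ε • (-e) = (((k - 1 : ℤ) : ℝ) * ε) • e := by
        rw [smul_neg, ← sub_eq_add_neg, ← sub_smul]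
        congr 1
        push_cast
        ring
      rw [hplus, hminus, hu_val k, hu_val (k + 1), hu_val (k - 1),
        hg_eq, hg_eq, hg_eq]
      have hm0 : min k K = k := min_eq_left (by omega)
      have hm1 : min (k + 1) K = k + 1 := min_eq_left hkK
      have hm2 : min (k - 1) K = k - 1 := min_eq_left (by omega)
      rw [hm0, hm1, hm2]
      have hz1 : lam ^ (k + 1) = lam ^ (k - 1) * (lam * lam) := by
        have h := zpow_add₀ hlam_ne (k - 1) 2
        rw [show k - 1 + 2 = k + 1 by ring] at h
        rw [h, show ((2:ℤ) = (2:ℕ)) from rfl, zpow_natCast, pow_two]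
      have hz0 : lam ^ k = lam ^ (k - 1) * lam := by
        have h := zpow_add₀ hlam_ne (k - 1) 1
        rw [show k - 1 + 1 = k by ring, zpow_one] at h
        exact h
      have hlam_eq2 : α * (lam * lam) + α = 2 * lam := by nlinarith [hlam_eq]
      rw [hz1, hz0, hβ]
      linear_combination (-(M * lam ^ (k - 1)) / 2) * hlam_eq2
    · rw [if_neg hxP, hu_not _ hxP, smul_zero, add_zero, hu_not _ hxP]
      linarith
  · -- infimum is 1
    set x1 : X := (ε / 2) • e with hx1_def
    have hx1_mem : x1 ∈ ball (0 : X) 1 := by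
      rw [mem_ball_zero_iff, hx1_def, norm_smul, he_norm, mul_one, Real.norm_eq_abs,
        abs_of_pos (by linarith : (0:ℝ) < ε / 2)]
      linarith
    have hx1_not : ¬ P x1 := by
      rintro ⟨k, hk⟩
      rw [hx1_def] at hk
      have hc : (ε / 2) * e i0 = ((k : ℝ) * ε) * e i0 :=
        congrArg (fun y : X => y i0) hk
      rw [he_coord, mul_one, mul_one] at hc
      have h2k : ((2 * k : ℤ) : ℝ) = 1 := by
        push_cast
        have := mul_right_cancel₀ (ne_of_gt hε0) (show (1/2 : ℝ) * ε = (k:ℝ) * ε by linarith)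
        linarith
      have : (2 * k : ℤ) = 1 := by exact_mod_cast h2k
      omega
    have hx1_val : u x1 = 1 := hu_not _ hx1_not
    apply le_antisymm
    · apply csInf_le
      · exact ⟨1, by rintro y ⟨z, _, rfl⟩; exact hu_ge1 z⟩
      · exact ⟨x1, hx1_mem, hx1_val⟩
    · apply le_csInf
      · exact ⟨u x1, ⟨x1, hx1_mem, rfl⟩⟩
      · rintro y ⟨z, _, rfl⟩; exact hu_ge1 z
  · -- supremum is at least M
    have h0_mem : (0 : X) ∈ ball (0 : X) 1 := by
      rw [mem_ball_zero_iff, norm_zero]; norm_num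
    have h0P : (0 : X) = (((0 : ℤ) : ℝ) * ε) • e := by
      rw [Int.cast_zero, zero_mul, zero_smul]
    have hu0 : u 0 = 1 + M := by
      rw [h0P, hu_val 0, hg_eq, min_eq_left hK_pos, zpow_zero, mul_one]
    calc M ≤ u 0 := by rw [hu0]; linarith
      _ ≤ sSup (u '' ball (0 : X) 1) := by
          apply le_csSup
          · exact ⟨1 + M * lam ^ K, by rintro y ⟨z, _, rfl⟩; exact hu_le z⟩
          · exact ⟨0, h0_mem, rfl⟩
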